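/- If f is a nonzero polynomial in F[x_1,...,x_n] of total degree at most q − 1, then there exists a vector v ∈ J(n,q) with f(v) ≠ 0. -/

import Mathlib

open MvPolynomial

/-- Strengthened induction: we can additionally require every coordinate `v j` to satisfy
`q ≤ v j + totalDegree f + 1`. -/
lemma stmt_4_aux {F : Type*} [Field F] (q : ℕ) (hq : 1 ≤ q)
    (i : Fin q → F) (hi : Function.Injective i) :
    ∀ (n : ℕ) (f : MvPolynomial (Fin n) F), f ≠ 0 → f.totalDegree ≤ q - 1 →
      ∃ v : Fin n → Fin q, Monotone v ∧ MvPolynomial.eval (fun j => i (v j)) f ≠ 0 ∧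
        ∀ j, q ≤ (v j : ℕ) + f.totalDegree + 1 := by
  classical
  intro n
  induction n with
  | zero =>
      intro f hf _
      obtain ⟨c, rfl⟩ := MvPolynomial.C_surjective (Fin 0) f
      refine ⟨fun j => j.elim0, fun a => a.elim0, ?_, fun j => j.elim0⟩
      simp only [MvPolynomial.eval_C]
      exact fun h => hf (by rw [h, map_zero])
  | succ n ih =>
      intro f hf hdeg
      set p : Polynomial (MvPolynomial (Fin n) F) := finSuccEquiv F n f with hp
      have hp0 : p ≠ 0 := by
        intro h
        apply hf
        have := congrArg (finSuccEquiv F n).symm h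
        simpa [hp] using this
      set d : ℕ := p.natDegree with hd
      set g : MvPolynomial (Fin n) F := p.coeff d with hg
      have hg0 : g ≠ 0 := by
        simpa [hg, hd] using Polynomial.leadingCoeff_ne_zero.mpr hp0
      have hgd : g.totalDegree + d ≤ f.totalDegree :=
        MvPolynomial.totalDegree_coeff_finSuccEquiv_add_le f d hg0
      have hgdeg : g.totalDegree ≤ q - 1 := le_trans (le_trans (Nat.le_add_right _ _) hgd) hdeg
      obtain ⟨w, hwmono, hweval, hwbd⟩ := ih g hg0 hgdeg
      set D := f.totalDegree with hD
      set Dg := g.totalDegree with hDg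
      -- the univariate polynomial obtained by substituting w into all but variable 0
      set P : Polynomial F := Polynomial.map (MvPolynomial.eval (fun j => i (w j))) p with hP
      have hPd : P.coeff d ≠ 0 := by
        rw [hP, Polynomial.coeff_map]
        exact hweval
      have hP0 : P ≠ 0 := fun h => hPd (by rw [h, Polynomial.coeff_zero])
      have hPdeg : P.natDegree ≤ d := Polynomial.natDegree_map_le
      -- candidate values for the new first coordinate
      set S : Finset (Fin q) :=
        Finset.univ.filter (fun a : Fin q => q ≤ (a : ℕ) + D + 1 ∧ (a : ℕ) + Dg + 1 ≤ q) with hS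
      have hDq : D ≤ q - 1 := hdeg
      have hcardS : d + 1 ≤ S.card := by
        have := Finset.card_le_card_of_injOn
          (f := fun k : ℕ => (⟨q - 1 - Dg - k, by omega⟩ : Fin q))
          (s := Finset.range (d + 1)) (t := S)
          (by
            intro k hk
            simp only [Finset.mem_coe, Finset.mem_range] at hk
            simp only [hS, Finset.mem_coe, Finset.mem_filter, Finset.mem_univ, true_and]
            omega)
          (by
            intro k hk l hl hkl
            simp only [Finset.mem_coe, Finset.mem_range] at hk hl
            simp only [Fin.mk.injEq] at hkl
            omega)
        simpa using this
      -- P has at most d roots, so some element of S (mapped through i) is not a root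
      have hroots : (P.roots.toFinset.card : ℕ) ≤ d :=
        le_trans (Multiset.toFinset_card_le _) (le_trans (Polynomial.card_roots' P) hPdeg)
      have : ∃ a ∈ S, Polynomial.eval (i a) P ≠ 0 := by
        by_contra h
        push_neg at h
        have himg : S.image i ⊆ P.roots.toFinset := by
          intro x hx
          obtain ⟨a, ha, rfl⟩ := Finset.mem_image.mp hx
          rw [Multiset.mem_toFinset, Polynomial.mem_roots hP0]
          exact h a ha
        have := Finset.card_le_card himg
        rw [Finset.card_image_of_injective _ hi] at this
        omega
      obtain ⟨a, haS, haP⟩ := this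
      simp only [hS, Finset.mem_filter, Finset.mem_univ, true_and] at haS
      obtain ⟨ha1, ha2⟩ := haS
      -- a ≤ w j for all j
      have haw : ∀ j, a ≤ w j := by
        intro j
        have := hwbd j
        have : (a : ℕ) ≤ (w j : ℕ) := by omega
        exact this
      refine ⟨Fin.cons a w, ?_, ?_, ?_⟩
      · -- monotone
        intro x y hxy
        induction x using Fin.cases with
        | zero =>
          induction y using Fin.cases with
          | zero => exact le_refl _
          | succ l => simpa using haw l
        | succ k =>
          induction y using Fin.cases with
          | zero => exact absurd (Fin.le_zero_iff.mp hxy) (Fin.succ_ne_zero k)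
          | succ l =>
            simp only [Fin.cons_succ]
            exact hwmono (Fin.succ_le_succ_iff.mp hxy)
      · -- eval ≠ 0
        have hfun : (fun j => i ((Fin.cons a w : Fin (n + 1) → Fin q) j)) =
            (Fin.cons (i a) (fun j => i (w j)) : Fin (n + 1) → F) := by
          funext j
          refine Fin.cases ?_ (fun k => ?_) j <;> simp
        rw [hfun, MvPolynomial.eval_eq_eval_mv_eval']
        exact haP
      · -- lower bound
        intro j
        refine Fin.cases ?_ (fun k => ?_) j
        · simpa using ha1
        · have := hwbd k
          simp only [Fin.cons_succ]
          omega

theorem stmt_4 {F : Type*} [Field F] (n q : ℕ) (hn : 1 ≤ n) (hq : 1 ≤ q)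
    (i : Fin q → F) (hi : Function.Injective i)
    (f : MvPolynomial (Fin n) F) (hf : f ≠ 0) (hdeg : f.totalDegree ≤ q - 1) :
    ∃ v : Fin n → Fin q, Monotone v ∧ MvPolynomial.eval (fun j => i (v j)) f ≠ 0 := by
  obtain ⟨v, h1, h2, _⟩ := stmt_4_aux q hq i hi n f hf hdeg
  exact ⟨v, h1, h2⟩
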